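/- arXiv:1011.1669 — 2 statements merged into one kernel-verified Lean document; each statement's English description precedes it below -/
import Mathlib

section
/- Let X = L₀/2 − (1+α+β)/2 with L₀ = 2(1−x)∂_x R + (α+β+1 − α x^{−1})(1 − R), and (Z f)(x) = (x−1)f(−x). Then ZX + XZ = Y + β·Id, where Y is multiplication by x. -/
open Polynomial

/-- The operator `L₀ = 2(1-x) ∂ₓ R + (α+β+1 - α x⁻¹)(1-R)` on polynomials. -/
noncomputable def L0 (α β : ℝ) (p : Polynomial ℝ) : Polynomial ℝ :=
  (2 : ℝ) • ((1 - X) * derivative (p.comp (-X)))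
    + (α + β + 1) • (p - p.comp (-X))
    - α • ((p - p.comp (-X)) /ₘ X)

/-- `X = L₀/2 - (1+α+β)/2`. -/
noncomputable def Xop (α β : ℝ) (p : Polynomial ℝ) : Polynomial ℝ :=
  (1 / 2 : ℝ) • L0 α β p - ((1 + α + β) / 2) • p

/-- `Y` is multiplication by `x`. -/
noncomputable def Yop (p : Polynomial ℝ) : Polynomial ℝ := X * p

/-- `(Zf)(x) = (x-1) f(-x)`. -/
noncomputable def Zop (p : Polynomial ℝ) : Polynomial ℝ := (X - 1) * p.comp (-X)

private lemma divX_of {a s : Polynomial ℝ} (h : X * a = s) : s /ₘ X = a := by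
  rw [← h, mul_divByMonic_cancel_left _ monic_X]

private lemma X_dvd_sub (p : Polynomial ℝ) : ∃ a, X * a = p - p.comp (-X) := by
  have hroot : (p - p.comp (-X)).eval 0 = 0 := by simp [eval_comp]
  have hdvd : X ∣ p - p.comp (-X) := by
    simpa [Polynomial.X_dvd_iff, coeff_zero_eq_eval_zero] using hroot
  obtain ⟨a, ha⟩ := hdvd
  exact ⟨a, ha.symm⟩

/-- The anticommutation relation `ZX + XZ = Y + β·Id`. -/
theorem ZX_plus_XZ (α β : ℝ) (p : Polynomial ℝ) :
    Zop (Xop α β p) + Xop α β (Zop p) = Yop p + β • p := by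
  obtain ⟨q, hq⟩ := X_dvd_sub p
  set r := p.comp (-X) with hr
  set dp := derivative p with hdp
  -- basic reflection facts
  have hrr : r.comp (-X) = p := by simp [hr, comp_assoc]
  have hdr : derivative r = -(dp.comp (-X)) := by
    simp [hr, hdp, derivative_comp]
  have hdrc : (derivative r).comp (-X) = -dp := by
    rw [hdr]; simp [comp_assoc, hdp]
  -- q is invariant under the reflection
  have hqc : q.comp (-X) = q := by
    have h1 : X * q.comp (-X) = X * q := by
      have h0 := congrArg (fun s => s.comp (-X)) hq
      simp only [mul_comp, X_comp, sub_comp, hrr, ← hr] at h0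
      have h2 : X * q.comp (-X) = p - r := by linear_combination -h0
      rw [h2, hq]
    exact mul_left_cancel₀ X_ne_zero h1
  -- the quotient appearing in `Xop p`
  have hq1 : (p - p.comp (-X)) /ₘ X = q := divX_of hq
  -- the quotient appearing in `Xop (Zop p)`
  have hq2 : (Zop p - (Zop p).comp (-X)) /ₘ X = p + r + q := by
    apply divX_of
    simp only [Zop, sub_comp, mul_comp, X_comp, one_comp, hrr, ← hr]
    linear_combination hq
  -- closed form for 2 • Xop p
  have hA : (2:ℝ) • Xop α β p
      = (2:ℝ) • ((1 - X) * derivative r) - (α + β + 1) • r - α • q := by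
    simp only [Xop, L0, hq1, ← hr, divX_of hq]
    module
  -- its reflection
  have hAc : (2:ℝ) • ((Xop α β p).comp (-X))
      = -((2:ℝ) • ((1 + X) * dp)) - (α + β + 1) • p - α • q := by
    have h0 := congrArg (fun s => s.comp (-X)) hA
    simp only [smul_comp, sub_comp, mul_comp, one_comp, X_comp, hrr, hqc, hdrc] at h0
    rw [h0]
    have h1 : (1 - -X) * -dp = -((1 + X) * dp) := by ring
    rw [h1, smul_neg]
  -- reflection of Zop p and its derivative
  have hgc : (Zop p).comp (-X) = -(X + 1) * p := by
    simp only [Zop, mul_comp, sub_comp, X_comp, one_comp, hrr, ← hr]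
    ring
  have hdgc : derivative ((Zop p).comp (-X)) = -(X + 1) * dp - p := by
    rw [hgc]
    simp only [derivative_mul, derivative_neg, derivative_add, derivative_X, derivative_one, ← hdp]
    ring
  -- closed form for 2 • Xop (Zop p)
  have hB : (2:ℝ) • Xop α β (Zop p)
      = (2:ℝ) • ((1 - X) * (-(X + 1) * dp - p))
        - (α + β + 1) • (-(X + 1) * p) - α • (p + r + q) := by
    simp only [Xop, L0]
    rw [hq2, hdgc, hgc]
    module
  -- reduce to the doubled identity
  apply smul_right_injective (Polynomial ℝ) (two_ne_zero (α := ℝ))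
  show (2:ℝ) • (Zop (Xop α β p) + Xop α β (Zop p)) = (2:ℝ) • (Yop p + β • p)
  rw [smul_add, smul_add]
  have hZA : (2:ℝ) • Zop (Xop α β p) = (X - 1) * ((2:ℝ) • ((Xop α β p).comp (-X))) := by
    rw [Zop, mul_smul_comm]
  rw [hZA, hAc, hB, Yop]
  simp only [smul_eq_C_mul, C_add, C_1, map_ofNat]
  linear_combination (-(C α : Polynomial ℝ)) * hq
end

section
/- For α > −1 and β > −1, the moments of the weight w(x) = κ|x|^α (1−x²)^{(β−1)/2}(1+x) on [−1,1], with κ = Γ(α/2+β/2+1)/(Γ(β/2+1/2)Γ(α/2+1/2)), satisfy c₀ = 1 and c_{2n} = c_{2n−1} = (α/2+1/2)_n / (α/2+β/2+1)_n for n ≥ 1, where c_n = ∫_{−1}^1 w(x) x^n dx and (a)_n denotes the Pochhammer symbol. -/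
open Real Polynomial

open Real Polynomial MeasureTheory intervalIntegral Set

lemma realBeta_intIntegrable {u v : ℝ} (hu : 0 < u) (hv : 0 < v) :
    IntervalIntegrable (fun x : ℝ => x ^ (u - 1) * (1 - x) ^ (v - 1)) volume 0 1 := by
  have h := Complex.betaIntegral_convergent (u := (u : ℂ)) (v := (v : ℂ)) (by simpa) (by simpa)
  have h2 : IntervalIntegrable (fun x : ℝ =>
      ((x : ℂ) ^ ((u : ℂ) - 1) * (1 - (x : ℂ)) ^ ((v : ℂ) - 1)).re) volume 0 1 := by
    constructor
    · exact h.1.re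
    · exact h.2.re
  apply h2.congr_ae
  filter_upwards [MeasureTheory.ae_restrict_mem measurableSet_uIoc] with x hx
  rw [Set.uIoc_of_le (by norm_num : (0:ℝ) ≤ 1)] at hx
  have hx0 : 0 ≤ x := le_of_lt hx.1
  have hx1 : 0 ≤ 1 - x := by linarith [hx.2]
  have e1 : ((u:ℂ) - 1) = ((u - 1 : ℝ) : ℂ) := by push_cast; ring
  have e2 : ((v:ℂ) - 1) = ((v - 1 : ℝ) : ℂ) := by push_cast; ring
  have e3 : (1 - (x:ℂ)) = ((1 - x : ℝ) : ℂ) := by push_cast; ring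
  rw [e1, e2, e3, ← Complex.ofReal_cpow hx0, ← Complex.ofReal_cpow hx1]
  simp

lemma realBeta_eval {u v : ℝ} (hu : 0 < u) (hv : 0 < v) :
    ∫ x in (0:ℝ)..1, x ^ (u - 1) * (1 - x) ^ (v - 1)
      = Real.Gamma u * Real.Gamma v / Real.Gamma (u + v) := by
  have h := Complex.Gamma_mul_Gamma_eq_betaIntegral (s := (u:ℂ)) (t := (v:ℂ)) (by simpa) (by simpa)
  have hB : Complex.betaIntegral (u:ℂ) (v:ℂ)
      = ((∫ x in (0:ℝ)..1, x ^ (u - 1) * (1 - x) ^ (v - 1) : ℝ) : ℂ) := by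
    rw [Complex.betaIntegral, ← intervalIntegral.integral_ofReal]
    apply intervalIntegral.integral_congr
    intro x hx
    rw [Set.uIcc_of_le (by norm_num : (0:ℝ) ≤ 1)] at hx
    have hx0 : (0:ℝ) ≤ x := hx.1
    have hx1 : (0:ℝ) ≤ 1 - x := by linarith [hx.2]
    have e1 : ((u:ℂ) - 1) = ((u - 1 : ℝ) : ℂ) := by push_cast; ring
    have e2 : ((v:ℂ) - 1) = ((v - 1 : ℝ) : ℂ) := by push_cast; ring
    have e3 : (1 - (x:ℂ)) = ((1 - x : ℝ) : ℂ) := by push_cast; ring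
    simp only [e1, e2, e3, ← Complex.ofReal_cpow hx0, ← Complex.ofReal_cpow hx1]
    push_cast
    ring
  rw [hB, ← Complex.ofReal_add, Complex.Gamma_ofReal, Complex.Gamma_ofReal,
    Complex.Gamma_ofReal] at h
  have hΓ : Real.Gamma (u + v) ≠ 0 := (Real.Gamma_pos_of_pos (by linarith)).ne'
  field_simp
  rw [mul_comm]
  exact_mod_cast h.symm

lemma sq_image_Ioo : (fun x : ℝ => x ^ 2) '' Ioo 0 1 = Ioo 0 1 := by
  ext t
  constructor
  · rintro ⟨x, ⟨hx0, hx1⟩, rfl⟩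
    refine ⟨by positivity, ?_⟩
    show x ^ 2 < 1
    nlinarith
  · rintro ⟨ht0, ht1⟩
    exact ⟨Real.sqrt t, ⟨Real.sqrt_pos.2 ht0,
      by rw [show (1:ℝ) = Real.sqrt 1 by simp]; exact Real.sqrt_lt_sqrt ht0.le ht1⟩,
      Real.sq_sqrt ht0.le⟩

lemma sq_subst (g : ℝ → ℝ) :
    ∫ x in Ioo (0:ℝ) 1, |2 * x| • g (x ^ 2) = ∫ t in Ioo (0:ℝ) 1, g t := by
  have hderiv : ∀ x ∈ Ioo (0:ℝ) 1,
      HasDerivWithinAt (fun x : ℝ => x ^ 2) (2 * x) (Ioo (0:ℝ) 1) x := by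
    intro x hx
    have := (hasDerivAt_pow 2 x).hasDerivWithinAt (s := Ioo (0:ℝ) 1)
    simpa using this
  have hinj : Set.InjOn (fun x : ℝ => x ^ 2) (Ioo (0:ℝ) 1) := by
    intro p hp q hq h
    have hp0 : 0 ≤ p := hp.1.le
    have hq0 : 0 ≤ q := hq.1.le
    simp only at h
    nlinarith [sq_nonneg (p - q), sq_nonneg (p + q)]
  have := integral_image_eq_integral_abs_deriv_smul (s := Ioo (0:ℝ) 1)
    (f := fun x : ℝ => x ^ 2) (f' := fun x : ℝ => 2 * x) measurableSet_Ioo hderiv hinj g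
  conv_rhs => rw [← sq_image_Ioo]
  exact this.symm

lemma keyIntegral {a b : ℝ} (ha : -1 < a) (hb : -1 < b) :
    ∫ x in (0:ℝ)..1, x ^ a * (1 - x ^ 2) ^ b
      = Real.Gamma ((a + 1)/2) * Real.Gamma (b + 1) / (2 * Real.Gamma ((a + 1)/2 + (b + 1))) := by
  set g : ℝ → ℝ := fun t => t ^ ((a + 1)/2 - 1) * (1 - t) ^ ((b + 1) - 1) with hg
  have h1 : ∫ x in (0:ℝ)..1, x ^ a * (1 - x ^ 2) ^ b
      = (1/2) * ∫ x in Ioo (0:ℝ) 1, |2 * x| • g (x ^ 2) := by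
    rw [intervalIntegral.integral_of_le (by norm_num : (0:ℝ) ≤ 1),
      MeasureTheory.integral_Ioc_eq_integral_Ioo, ← MeasureTheory.integral_const_mul]
    apply MeasureTheory.setIntegral_congr_fun measurableSet_Ioo
    intro x hx
    have hx0 : 0 < x := hx.1
    have habs : |2 * x| = 2 * x := abs_of_pos (by linarith)
    simp only [hg, smul_eq_mul, habs]
    have e1 : (x ^ 2 : ℝ) ^ ((a + 1)/2 - 1) = x ^ (a - 1) := by
      rw [← Real.rpow_natCast x 2, ← Real.rpow_mul hx0.le]
      norm_num
      ring_nf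
    rw [e1]
    have e2 : x ^ a = x * x ^ (a - 1) := by
      nth_rewrite 1 [show a = 1 + (a - 1) by ring]
      rw [Real.rpow_add hx0, Real.rpow_one]
    rw [e2]
    ring_nf
  rw [h1, sq_subst g, ← MeasureTheory.integral_Ioc_eq_integral_Ioo,
    ← intervalIntegral.integral_of_le (by norm_num : (0:ℝ) ≤ 1)]
  rw [show (∫ t in (0:ℝ)..1, g t) = ∫ t in (0:ℝ)..1, t ^ ((a+1)/2 - 1) * (1 - t) ^ ((b+1) - 1) from rfl]
  rw [realBeta_eval (by linarith) (by linarith)]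
  ring

lemma keyIntegrable {a b : ℝ} (ha : -1 < a) (hb : -1 < b) :
    IntervalIntegrable (fun x : ℝ => x ^ a * (1 - x ^ 2) ^ b) volume 0 1 := by
  have hcont : ContinuousOn (fun x : ℝ => (1 + x) ^ b) (Set.uIcc 0 1) := by
    apply ContinuousOn.rpow_const (by fun_prop)
    intro x hx
    rw [Set.uIcc_of_le (by norm_num : (0:ℝ) ≤ 1)] at hx
    exact Or.inl (by nlinarith [hx.1])
  have h := (realBeta_intIntegrable (u := a + 1) (v := b + 1)
    (by linarith) (by linarith)).mul_continuousOn hcont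
  apply h.congr_ae
  filter_upwards [MeasureTheory.ae_restrict_mem measurableSet_uIoc] with x hx
  rw [Set.uIoc_of_le (by norm_num : (0:ℝ) ≤ 1)] at hx
  have hx0 : 0 < x := hx.1
  have h1x : (0:ℝ) ≤ 1 - x := by linarith [hx.2]
  have h1x' : (0:ℝ) ≤ 1 + x := by linarith
  simp only [add_sub_cancel_right]
  rw [show (1 - x ^ 2 : ℝ) = (1 - x) * (1 + x) by ring, Real.mul_rpow h1x h1x']
  ring

lemma II_aux {u v : ℝ} (hu : 0 < u) (hv : 0 < v) {g : ℝ → ℝ}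
    (hg : ContinuousOn g (Set.uIcc 0 1)) :
    IntervalIntegrable (fun x : ℝ => x ^ (u - 1) * (1 - x) ^ (v - 1) * g x) volume 0 1 :=
  (realBeta_intIntegrable hu hv).mul_continuousOn hg

lemma cont_onePlus_rpow (b : ℝ) : ContinuousOn (fun x : ℝ => (1 + x) ^ b) (Set.uIcc 0 1) := by
  apply ContinuousOn.rpow_const (by fun_prop)
  intro x hx
  rw [Set.uIcc_of_le (by norm_num : (0:ℝ) ≤ 1)] at hx
  exact Or.inl (by nlinarith [hx.1])

lemma wii_right {α b : ℝ} (hα : -1 < α) (hb : -1 < b) (κ : ℝ) (m : ℕ) :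
    IntervalIntegrable (fun x : ℝ => κ * |x| ^ α * (1 - x ^ 2) ^ b * (1 + x) * x ^ m)
      volume 0 1 := by
  have hg : ContinuousOn (fun x : ℝ => κ * (1 + x) ^ (b + 1) * x ^ m) (Set.uIcc 0 1) :=
    (continuousOn_const.mul (cont_onePlus_rpow (b + 1))).mul (by fun_prop)
  have h := II_aux (u := α + 1) (v := b + 1) (by linarith) (by linarith) hg
  apply h.congr_ae
  filter_upwards [MeasureTheory.ae_restrict_mem measurableSet_uIoc] with x hx
  rw [Set.uIoc_of_le (by norm_num : (0:ℝ) ≤ 1)] at hx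
  have hx0 : 0 < x := hx.1
  have h1x : (0:ℝ) ≤ 1 - x := by linarith [hx.2]
  have h1x' : (0:ℝ) ≤ 1 + x := by linarith
  simp only [add_sub_cancel_right]
  rw [show (1 - x ^ 2 : ℝ) = (1 - x) * (1 + x) by ring, Real.mul_rpow h1x h1x',
    Real.rpow_add_one (by linarith : (1:ℝ) + x ≠ 0), abs_of_pos hx0]
  ring

lemma wii_neg {α b : ℝ} (hα : -1 < α) (hb : -1 < b) (κ : ℝ) (m : ℕ) :
    IntervalIntegrable (fun x : ℝ => κ * |x| ^ α * (1 - x ^ 2) ^ b * (1 - x) * x ^ m)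
      volume 0 1 := by
  have hg : ContinuousOn (fun x : ℝ => κ * (1 + x) ^ b * x ^ m) (Set.uIcc 0 1) :=
    (continuousOn_const.mul (cont_onePlus_rpow b)).mul (by fun_prop)
  have h := II_aux (u := α + 1) (v := b + 2) (by linarith) (by linarith) hg
  apply h.congr_ae
  filter_upwards [MeasureTheory.ae_restrict_mem measurableSet_uIoc] with x hx
  rw [Set.uIoc_of_le (by norm_num : (0:ℝ) ≤ 1)] at hx
  have hx0 : 0 < x := hx.1
  have h1x : (0:ℝ) ≤ 1 - x := by linarith [hx.2]
  have h1x' : (0:ℝ) ≤ 1 + x := by linarith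
  have e : x ^ (α + 1 - 1) * (1 - x) ^ (b + 2 - 1) * (κ * (1 + x) ^ b * x ^ m)
      = x ^ α * ((1 - x) ^ (b + 1) * (1 + x) ^ b) * (κ * x ^ m) := by
    rw [show α + 1 - 1 = α by ring, show b + 2 - 1 = b + 1 by ring]; ring
  rw [e, abs_of_pos hx0]
  rcases eq_or_lt_of_le hx.2 with h1 | h1
  · subst h1
    rw [show (1:ℝ) - 1 = 0 by ring, show (1:ℝ) - 1 ^ 2 = 0 by ring,
      Real.zero_rpow (by linarith : b + 1 ≠ 0)]
    ring
  · have h1xpos : (0:ℝ) < 1 - x := by linarith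
    rw [show (1 - x ^ 2 : ℝ) = (1 - x) * (1 + x) by ring, Real.mul_rpow h1x h1x',
      Real.rpow_add_one h1xpos.ne']
    ring

lemma gamma_poch {x : ℝ} (hx : 0 < x) (n : ℕ) :
    Real.Gamma (x + n) = Real.Gamma x * (ascPochhammer ℝ n).eval x := by
  induction n with
  | zero => simp
  | succ n ih =>
    have hxn : x + (n : ℝ) ≠ 0 := by positivity
    rw [ascPochhammer_succ_eval]
    push_cast
    rw [show x + ((n : ℝ) + 1) = (x + n) + 1 by ring, Real.Gamma_add_one hxn, ih]
    ring

lemma rpow_mul_pow {α : ℝ} (hα : -1 < α) (n : ℕ) {x : ℝ} (hx : 0 ≤ x) :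
    x ^ α * x ^ (2 * n) = x ^ (α + 2 * n) := by
  rcases eq_or_lt_of_le hx with h | h
  · rcases Nat.eq_zero_or_pos n with hn | hn
    · subst hn; simp
    · rw [← h, zero_pow (by positivity), Real.zero_rpow (by
        have h1 : (1:ℝ) ≤ (n:ℝ) := by exact_mod_cast hn
        nlinarith : α + 2 * (n:ℝ) ≠ 0)]
      ring
  · rw [← Real.rpow_natCast x (2 * n), ← Real.rpow_add h]
    push_cast
    ring_nf


/-- For `α > -1`, `β > -1`, the moments of the weight
`w(x) = κ |x|^α (1-x²)^{(β-1)/2} (1+x)` on `[-1,1]`, with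
`κ = Γ(α/2+β/2+1)/(Γ(β/2+1/2) Γ(α/2+1/2))`, satisfy `c₀ = 1` and
`c_{2n} = c_{2n-1} = (α/2+1/2)_n / (α/2+β/2+1)_n` for `n ≥ 1`. -/
theorem moments_of_little_m1_jacobi_weight (α β : ℝ) (hα : -1 < α) (hβ : -1 < β)
    (κ : ℝ) (hκ : κ = Real.Gamma (α/2 + β/2 + 1) / (Real.Gamma (β/2 + 1/2) * Real.Gamma (α/2 + 1/2)))
    (w : ℝ → ℝ) (hw : ∀ x, w x = κ * |x| ^ α * (1 - x^2) ^ ((β - 1)/2) * (1 + x))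
    (c : ℕ → ℝ) (hc : ∀ n, c n = ∫ x in (-1:ℝ)..1, w x * x ^ n) :
    c 0 = 1 ∧ ∀ n : ℕ, 1 ≤ n →
      c (2 * n) = (ascPochhammer ℝ n).eval (α/2 + 1/2) / (ascPochhammer ℝ n).eval (α/2 + β/2 + 1) ∧
      c (2 * n - 1) = (ascPochhammer ℝ n).eval (α/2 + 1/2) / (ascPochhammer ℝ n).eval (α/2 + β/2 + 1) := by
  have hb : -1 < (β - 1)/2 := by linarith
  set A := α/2 + 1/2 with hA
  set B := β/2 + 1/2 with hB
  set S := α/2 + β/2 + 1 with hS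
  have hApos : 0 < A := by rw [hA]; linarith
  have hBpos : 0 < B := by rw [hB]; linarith
  have hSpos : 0 < S := by rw [hS]; linarith
  have key : ∀ m n : ℕ, (m = 2 * n ∨ m + 1 = 2 * n) →
      c m = κ * (Real.Gamma (A + n) * Real.Gamma B / Real.Gamma (S + n)) := by
    intro m n hmn
    have hF2 : IntervalIntegrable (fun x => w x * x ^ m) volume 0 1 := by
      simp_rw [hw]; exact wii_right hα hb κ m
    have hFneg : IntervalIntegrable (fun x : ℝ => w (-x) * (-x) ^ m) volume 0 1 := by
      have hEq : (fun x : ℝ => w (-x) * (-x) ^ m)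
          = fun x : ℝ => (κ * (-1:ℝ) ^ m) * |x| ^ α * (1 - x ^ 2) ^ ((β - 1)/2) * (1 - x) * x ^ m := by
        funext x
        rw [hw, abs_neg, show (1 - (-x) ^ 2 : ℝ) = 1 - x ^ 2 by ring, neg_pow]
        ring
      rw [hEq]
      exact wii_neg hα hb _ m
    have hF1 : IntervalIntegrable (fun x => w x * x ^ m) volume (-1) 0 := by
      have h := (IntervalIntegrable.iff_comp_neg (f := fun x : ℝ => w (-x) * (-x) ^ m) enorm_ne_top).mp hFneg
      simp only [neg_neg, neg_zero] at h
      exact h.symm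
    rw [hc]
    rw [← intervalIntegral.integral_add_adjacent_intervals hF1 hF2]
    have hneg : (∫ x in (-1:ℝ)..0, w x * x ^ m) = ∫ x in (0:ℝ)..1, w (-x) * (-x) ^ m := by
      have h := intervalIntegral.integral_comp_neg (a := (0:ℝ)) (b := 1) (fun x => w x * x ^ m)
      simp only [neg_zero] at h
      exact h.symm
    rw [hneg, ← intervalIntegral.integral_add hFneg hF2]
    have hpt : Set.EqOn (fun x : ℝ => w (-x) * (-x) ^ m + w x * x ^ m)
        (fun x : ℝ => 2 * κ * (x ^ (α + 2 * (n:ℝ)) * (1 - x ^ 2) ^ ((β - 1)/2)))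
        (Set.uIcc 0 1) := by
      intro x hx
      rw [Set.uIcc_of_le (by norm_num : (0:ℝ) ≤ 1)] at hx
      have hx0 : (0:ℝ) ≤ x := hx.1
      simp only [hw, abs_neg, abs_of_nonneg hx0, show ((-x) ^ 2 : ℝ) = x ^ 2 by ring]
      have e1 : x ^ α * x ^ (2 * n) = x ^ (α + 2 * (n:ℝ)) := rpow_mul_pow hα n hx0
      rcases hmn with hm | hm
      · subst hm
        rw [Even.neg_pow (even_two_mul n)]
        linear_combination (2 * κ * (1 - x ^ 2) ^ ((β - 1)/2)) * e1
      · have hodd : Odd m := by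
          rcases Nat.even_or_odd m with he | ho
          · exfalso
            have : Even (m + 1) := hm ▸ even_two_mul n
            rw [Nat.even_add_one] at this
            exact this he
          · exact ho
        rw [hodd.neg_pow]
        have e2 : x * x ^ m = x ^ (2 * n) := by
          rw [← pow_succ', hm]
        linear_combination (2 * κ * (1 - x ^ 2) ^ ((β - 1)/2) * x ^ α) * e2
          + (2 * κ * (1 - x ^ 2) ^ ((β - 1)/2)) * e1
    rw [intervalIntegral.integral_congr hpt, intervalIntegral.integral_const_mul]
    have hcast : (0:ℝ) ≤ (n:ℝ) := Nat.cast_nonneg n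
    rw [keyIntegral (by linarith : -1 < α + 2 * (n:ℝ)) hb]
    rw [show (α + 2 * (n:ℝ) + 1)/2 = A + n by rw [hA]; ring,
      show (β - 1)/2 + 1 = B by rw [hB]; ring,
      show A + (n:ℝ) + B = S + n by rw [hA, hB, hS]; ring]
    ring
  have final : ∀ n : ℕ, κ * (Real.Gamma (A + n) * Real.Gamma B / Real.Gamma (S + n))
      = (ascPochhammer ℝ n).eval A / (ascPochhammer ℝ n).eval S := by
    intro n
    have hPS : (ascPochhammer ℝ n).eval S ≠ 0 := by
      have h1 : 0 < Real.Gamma (S + n) := Real.Gamma_pos_of_pos (by positivity)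
      rw [gamma_poch hSpos] at h1
      intro h0
      rw [h0, mul_zero] at h1
      exact lt_irrefl 0 h1
    have hΓA : Real.Gamma A ≠ 0 := (Real.Gamma_pos_of_pos hApos).ne'
    have hΓB : Real.Gamma B ≠ 0 := (Real.Gamma_pos_of_pos hBpos).ne'
    have hΓS : Real.Gamma S ≠ 0 := (Real.Gamma_pos_of_pos hSpos).ne'
    rw [gamma_poch hApos, gamma_poch hSpos, hκ]
    field_simp
  constructor
  · have h0 := key 0 0 (Or.inl rfl)
    rw [final 0] at h0
    simpa using h0
  · intro n hn
    constructor
    · rw [key (2 * n) n (Or.inl rfl), final n]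
    · rw [key (2 * n - 1) n (Or.inr (by omega)), final n]
end
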